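/- Fix α > 0 with α ≠ 1 and let 𝔤 = 𝔤^α_{3.4} ⊕ 𝔤₁ be the 4-dimensional real Lie algebra with basis e₁,...,e₄ and nonzero brackets [e₂,e₃] = e₁ − αe₂ and [e₃,e₁] = αe₁ − e₂. A 4×4 real matrix R equals η·Id + D for some η ∈ ℝ and some derivation D of 𝔤 if and only if R₃₁ = R₄₁ = R₃₂ = R₄₂ = 0, R₁₄ = R₂₄ = R₃₄ = 0, R₂₁ = R₁₂, and R₂₂ = R₁₁. In this case η = R₃₃. -/
import Mathlib


open Matrix

/-- The Lie bracket of the Lie algebra, in coordinates. -/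
def br (α : ℝ) (x y : Fin 4 → ℝ) : Fin 4 → ℝ :=
  ![(x 1 * y 2 - x 2 * y 1) + α * (x 2 * y 0 - x 0 * y 2), -(α * (x 1 * y 2 - x 2 * y 1)) - (x 2 * y 0 - x 0 * y 2), (0:ℝ), (0:ℝ)]

/-- `D` (acting via `mulVec`) is a derivation of the bracket. -/
def IsDer (α : ℝ) (D : Matrix (Fin 4) (Fin 4) ℝ) : Prop :=
  ∀ x y : Fin 4 → ℝ, D.mulVec (br α x y) = br α (D.mulVec x) y + br α x (D.mulVec y)

/-- Entry conditions satisfied by any derivation. -/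
lemma der_facts (α : ℝ) (hα : 0 < α) (hα1 : α ≠ 1) (D : Matrix (Fin 4) (Fin 4) ℝ)
    (hD : IsDer α D) :
    D 2 0 = 0 ∧ D 3 0 = 0 ∧ D 2 1 = 0 ∧ D 3 1 = 0 ∧ D 0 3 = 0 ∧ D 1 3 = 0 ∧ D 2 3 = 0 ∧
      D 1 0 = D 0 1 ∧ D 1 1 = D 0 0 ∧ D 2 2 = 0 := by
  have hne : (1:ℝ) - α ^ 2 ≠ 0 := by
    have h1 : (1:ℝ) - α ≠ 0 := sub_ne_zero.2 (Ne.symm hα1)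
    have h2 : (1:ℝ) + α ≠ 0 := by positivity
    have : (1:ℝ) - α ^ 2 = (1 - α) * (1 + α) := by ring
    rw [this]; exact mul_ne_zero h1 h2
  have key : ∀ u v : ℝ, u + α * v = 0 → α * u + v = 0 → u = 0 ∧ v = 0 := by
    intro u v h1 h2
    have hu : (1 - α ^ 2) * u = 0 := by linear_combination h1 - α * h2
    have hv : (1 - α ^ 2) * v = 0 := by linear_combination h2 - α * h1
    exact ⟨by simpa [hne] using mul_eq_zero.1 hu, by simpa [hne] using mul_eq_zero.1 hv⟩
  have a0 := congrFun (hD ![1,0,0,0] ![0,1,0,0]) 0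
  have a1 := congrFun (hD ![1,0,0,0] ![0,1,0,0]) 1
  have b1 := congrFun (hD ![1,0,0,0] ![0,0,0,1]) 1
  have c0 := congrFun (hD ![0,0,1,0] ![0,0,0,1]) 0
  have c1 := congrFun (hD ![0,0,1,0] ![0,0,0,1]) 1
  have d0 := congrFun (hD ![1,0,0,0] ![0,0,1,0]) 0
  have d1 := congrFun (hD ![1,0,0,0] ![0,0,1,0]) 1
  have d3 := congrFun (hD ![1,0,0,0] ![0,0,1,0]) 3
  have f0 := congrFun (hD ![0,1,0,0] ![0,0,1,0]) 0
  have f1 := congrFun (hD ![0,1,0,0] ![0,0,1,0]) 1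
  have f3 := congrFun (hD ![0,1,0,0] ![0,0,1,0]) 3
  simp [br, Matrix.mulVec, dotProduct, Fin.sum_univ_four] at a0 a1 b1 c0 c1 d0 d1 d3 f0 f1 f3
  obtain ⟨h20, h21⟩ := key (D 2 0) (D 2 1) (by linarith) (by linarith)
  obtain ⟨h13, h03'⟩ := key (D 1 3) (-(D 0 3)) (by linarith) (by linarith)
  obtain ⟨h30, h31'⟩ := key (D 3 0) (-(D 3 1)) (by linarith) (by linarith)
  have h03 : D 0 3 = 0 := by linarith
  have h31 : D 3 1 = 0 := by linarith
  have h22 : D 2 2 = 0 := by linarith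
  have h11 : D 1 1 = D 0 0 := by linarith
  have h10 : D 1 0 = D 0 1 := by linear_combination -d0 + α * h22
  exact ⟨h20, h30, h21, h31, h03, h13, b1.symm, h10, h11, h22⟩

set_option maxHeartbeats 1000000 in
/-- A matrix with the stated entry conditions yields a derivation after subtracting
`R 2 2 • 1`. -/
lemma der_of (α : ℝ) (R : Matrix (Fin 4) (Fin 4) ℝ)
    (h1 : R 2 0 = 0) (h2 : R 3 0 = 0) (h3 : R 2 1 = 0) (h4 : R 3 1 = 0)
    (h5 : R 0 3 = 0) (h6 : R 1 3 = 0) (h7 : R 2 3 = 0)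
    (h8 : R 1 0 = R 0 1) (h9 : R 1 1 = R 0 0) :
    IsDer α (R - R 2 2 • (1 : Matrix (Fin 4) (Fin 4) ℝ)) := by
  intro x y
  funext i
  fin_cases i <;>
    simp [br, Matrix.mulVec, dotProduct, Fin.sum_univ_four, Matrix.sub_apply,
      Matrix.smul_apply, Matrix.one_apply, h1, h2, h3, h4, h5, h6, h7, h8, h9] <;>
    ring

theorem stmt_6 (α : ℝ) (hα : 0 < α) (hα1 : α ≠ 1) (R : Matrix (Fin 4) (Fin 4) ℝ) :
    ((∃ (η : ℝ) (D : Matrix (Fin 4) (Fin 4) ℝ), IsDer α D ∧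
        R = η • (1 : Matrix (Fin 4) (Fin 4) ℝ) + D) ↔
      (R 2 0 = 0 ∧ R 3 0 = 0 ∧ R 2 1 = 0 ∧ R 3 1 = 0 ∧ R 0 3 = 0 ∧ R 1 3 = 0 ∧ R 2 3 = 0 ∧ R 1 0 = R 0 1 ∧ R 1 1 = R 0 0)) ∧
    (∀ (η : ℝ) (D : Matrix (Fin 4) (Fin 4) ℝ), IsDer α D →
      R = η • (1 : Matrix (Fin 4) (Fin 4) ℝ) + D → η = R 2 2) := by
  constructor
  · constructor
    · rintro ⟨η, D, hD, rfl⟩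
      obtain ⟨f1, f2, f3, f4, f5, f6, f7, f8, f9, f10⟩ := der_facts α hα hα1 D hD
      refine ⟨?_, ?_, ?_, ?_, ?_, ?_, ?_, ?_, ?_⟩ <;>
        simp [Matrix.add_apply, Matrix.smul_apply, Matrix.one_apply,
          f1, f2, f3, f4, f5, f6, f7, f8, f9, f10]
    · rintro ⟨h1, h2, h3, h4, h5, h6, h7, h8, h9⟩
      refine ⟨R 2 2, R - R 2 2 • 1, der_of α R h1 h2 h3 h4 h5 h6 h7 h8 h9, by abel⟩
  · intro η D hD hR
    obtain ⟨-, -, -, -, -, -, -, -, -, f10⟩ := der_facts α hα hα1 D hD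
    have := congrFun (congrFun hR 2) 2
    simp [Matrix.add_apply, Matrix.smul_apply, Matrix.one_apply, f10] at this
    linarith
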